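/- Let m ≥ 0 and j ≥ 1 be integers and let α and β be partitions such that every part of α is at most m+j, every part of β is at most j, β_1 = j, every part of β is at least 2, α_1 = m+j > α_2, and ℓ(β) ≥ ℓ(α) + 1. Then there exists an integer k with 1 ≤ k ≤ ℓ(α) such that α_{k+1} ≤ β_k − 1 and α_k ≥ β_{k+1} − 1. -/
import Mathlib


noncomputable section

/-- The i-th largest part (1-indexed) of a partition, represented as a
multiset of parts; `0` if `i` exceeds the number of parts. -/
def partAt (mu : Multiset ℕ) (i : ℕ) : ℕ :=
  (mu.sort (· ≥ ·)).getD (i - 1) 0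

lemma partAt_eq_zero (mu : Multiset ℕ) {i : ℕ} (h : Multiset.card mu < i) :
    partAt mu i = 0 := by
  unfold partAt
  apply List.getD_eq_default
  rw [Multiset.length_sort]
  omega

lemma partAt_mem (mu : Multiset ℕ) {i : ℕ} (h1 : 1 ≤ i) (h2 : i ≤ Multiset.card mu) :
    partAt mu i ∈ mu := by
  unfold partAt
  have hlt : i - 1 < (mu.sort (· ≥ ·)).length := by rw [Multiset.length_sort]; omega
  rw [List.getD_eq_getElem _ _ hlt]
  rw [← Multiset.mem_sort (· ≥ ·)]
  exact List.getElem_mem hlt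

lemma partAt_anti (mu : Multiset ℕ) {i i' : ℕ} (h : i ≤ i') :
    partAt mu i' ≤ partAt mu i := by
  unfold partAt
  set l := mu.sort (· ≥ ·) with hl
  have hsorted : List.Pairwise (· ≥ ·) l := Multiset.pairwise_sort _ _
  by_cases hb : i' - 1 < l.length
  · have ha : i - 1 < l.length := by omega
    rw [List.getD_eq_getElem _ _ hb, List.getD_eq_getElem _ _ ha]
    rcases eq_or_lt_of_le (show i - 1 ≤ i' - 1 by omega) with heq | hlt
    · simp [heq]
    · exact List.pairwise_iff_getElem.mp hsorted _ _ ha hb hlt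
  · rw [List.getD_eq_default _ _ (by omega)]
    exact Nat.zero_le _

/-- If m ≥ 0, j ≥ 1, α and β are partitions with parts of α at most m+j,
parts of β at most j, β₁ = j, all parts of β at least 2, α₁ = m+j > α₂,
and ℓ(β) ≥ ℓ(α) + 1, then there is k with 1 ≤ k ≤ ℓ(α),
α_{k+1} ≤ β_k - 1 and α_k ≥ β_{k+1} - 1. -/
theorem exists_k (m j : ℕ) (hj : 1 ≤ j) (alpha beta : Multiset ℕ)
    (halpha_pos : ∀ x ∈ alpha, 0 < x) (hbeta_pos : ∀ x ∈ beta, 0 < x)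
    (halpha_le : ∀ x ∈ alpha, x ≤ m + j) (hbeta_le : ∀ x ∈ beta, x ≤ j)
    (hbeta1 : partAt beta 1 = j) (hbeta2 : ∀ x ∈ beta, 2 ≤ x)
    (halpha1 : partAt alpha 1 = m + j) (halpha12 : partAt alpha 2 < m + j)
    (hlen : Multiset.card alpha + 1 ≤ Multiset.card beta) :
    ∃ k : ℕ, 1 ≤ k ∧ k ≤ Multiset.card alpha ∧
      (partAt alpha (k + 1) : ℤ) ≤ (partAt beta k : ℤ) - 1 ∧
      (partAt beta (k + 1) : ℤ) - 1 ≤ (partAt alpha k : ℤ) := by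
  set L := Multiset.card alpha with hL
  have hL1 : 1 ≤ L := by
    by_contra h
    have : partAt alpha 1 = 0 := partAt_eq_zero alpha (by omega)
    omega
  -- the predicate: α_{n+2} < β_{n+1}
  have hexists : ∃ n : ℕ, partAt alpha (n + 2) < partAt beta (n + 1) := by
    refine ⟨L - 1, ?_⟩
    have h1 : partAt alpha (L - 1 + 2) = 0 := partAt_eq_zero alpha (by omega)
    have h2 : 2 ≤ partAt beta (L - 1 + 1) :=
      hbeta2 _ (partAt_mem beta (by omega) (by omega))
    omega
  classical
  set n := Nat.find hexists with hn
  have hQ : partAt alpha (n + 2) < partAt beta (n + 1) := Nat.find_spec hexists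
  have hnle : n ≤ L - 1 := Nat.find_le (by
    have h1 : partAt alpha (L - 1 + 2) = 0 := partAt_eq_zero alpha (by omega)
    have h2 : 2 ≤ partAt beta (L - 1 + 1) :=
      hbeta2 _ (partAt_mem beta (by omega) (by omega))
    omega)
  refine ⟨n + 1, by omega, by omega, ?_, ?_⟩
  · show (partAt alpha (n + 2) : ℤ) ≤ (partAt beta (n + 1) : ℤ) - 1
    push_cast; omega
  have hcond2 : partAt beta (n + 2) ≤ partAt alpha (n + 1) + 1 := by
    rcases Nat.eq_zero_or_pos n with h0 | hpos
    · have h1 : partAt beta (n + 2) ≤ partAt beta 1 := partAt_anti beta (by omega)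
      have h2 : partAt alpha (n + 1) = partAt alpha 1 := by rw [h0]
      omega
    · have hmin : ¬ partAt alpha (n - 1 + 2) < partAt beta (n - 1 + 1) :=
        Nat.find_min hexists (by omega)
      have h1 : partAt beta (n - 1 + 1) ≤ partAt alpha (n - 1 + 2) := by omega
      have h2 : partAt beta (n + 2) ≤ partAt beta (n - 1 + 1) := partAt_anti beta (by omega)
      have h3 : partAt alpha (n - 1 + 2) = partAt alpha (n + 1) := by
        congr 1; omega
      omega
  show (partAt beta (n + 2) : ℤ) - 1 ≤ (partAt alpha (n + 1) : ℤ)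
  push_cast
  omega
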